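/- arXiv:2209.00085 — 2 statements merged into one kernel-verified Lean document; each statement's English description precedes it below -/
import Mathlib

section
/- Let ξ_1, …, ξ_s be complex numbers, none of which is a root of unity, such that the multiset {ξ_1, …, ξ_s} is stable under complex conjugation, and set a_n := ∏_{i=1}^s (ξ_i^n − 1) for n ≥ 1. Then every a_n is a nonzero real number whose sign equals (−1)^{ε₁ + ε₂·n}, where ε₁ is the number of indices i with ξ_i real and −1 < ξ_i < 1, and ε₂ is the number of indices i with ξ_i real and ξ_i < −1. Furthermore, the zeta function ζ_{(|a_n|)}(z) = exp(∑_{n≥1} |a_n| z^n / n) is the power series expansion of a rational function. -/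
open scoped BigOperators
open Filter

/-- The `p`-adic absolute value of the natural number `n`, normalised by `|p|ₚ = 1/p`. -/
noncomputable def padicAbs (p n : ℕ) : ℝ := ((p : ℝ) ^ padicValNat p n)⁻¹

/-- A gcd sequence: `x n = x (gcd n d)` for some `d ≥ 1` and all `n ≥ 1`. -/
def IsGcdSeq {α : Type*} (x : ℕ → α) : Prop :=
  ∃ d : ℕ, 1 ≤ d ∧ ∀ n : ℕ, 1 ≤ n → x n = x (Nat.gcd n d)

/-- A gcd sequence with a period coprime to `p`. -/
def IsGcdSeqCoprime {α : Type*} (x : ℕ → α) (p : ℕ) : Prop :=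
  ∃ d : ℕ, 1 ≤ d ∧ Nat.Coprime d p ∧ ∀ n : ℕ, 1 ≤ n → x n = x (Nat.gcd n d)

/-- No complex eigenvalue of the integer matrix `A` is a root of unity. -/
def NoRootOfUnityEigenvalue {k : ℕ} (A : Matrix (Fin k) (Fin k) ℤ) : Prop :=
  ∀ ξ : ℂ, ((A.map (Int.cast : ℤ → ℂ)).charpoly).IsRoot ξ → ∀ m : ℕ, 1 ≤ m → ξ ^ m ≠ 1

/-- The non-linear-recurrent factor `r n * ∏_{p ∈ S} |n|ₚ^{s p n} p^{-t p n · |n|ₚ⁻¹}`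
of a FAD-sequence. -/
noncomputable def fadFactor (S : Finset ℕ) (r : ℕ → ℝ) (s t : ℕ → ℕ → ℝ) (n : ℕ) : ℝ :=
  r n * ∏ p ∈ S, (padicAbs p n ^ s p n * (p : ℝ) ^ (-(t p n) * (padicAbs p n)⁻¹))

/-- `a` is a FAD-sequence with data `(A, S, c, r, s, t)`. -/
def IsFADWith (a : ℕ → ℤ) {k : ℕ} (A : Matrix (Fin k) (Fin k) ℤ)
    (S : Finset ℕ) (c : ℝ) (r : ℕ → ℝ) (s t : ℕ → ℕ → ℝ) : Prop :=
  NoRootOfUnityEigenvalue A ∧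
  (∀ p ∈ S, Nat.Prime p) ∧
  0 < c ∧
  IsGcdSeq r ∧ (∀ n : ℕ, 1 ≤ n → 0 < r n) ∧
  (∀ p ∈ S, IsGcdSeqCoprime (s p) p ∧ ∀ n : ℕ, 1 ≤ n → 0 ≤ s p n) ∧
  (∀ p ∈ S, IsGcdSeqCoprime (t p) p ∧ ∀ n : ℕ, 1 ≤ n → 0 ≤ t p n) ∧
  ∀ n : ℕ, 1 ≤ n →
    (a n : ℝ) = |((A ^ n - 1).det : ℝ)| * c ^ n * fadFactor S r s t n

/-- The number of fixed points of the `n`-th iterate of `f`, as an integer. -/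
noncomputable def fixCount {X : Type*} (f : X → X) (n : ℕ) : ℤ :=
  (Nat.card (Function.fixedPoints (f^[n])) : ℤ)

/-- The exponential entropy `Λ = c · ∏_{|ξᵢ| > 1} |ξᵢ|` of a FAD-system with data `(A, …, c, …)`,
the product running over the complex eigenvalues of `A` with multiplicity. -/
noncomputable def expEntropy {k : ℕ} (A : Matrix (Fin k) (Fin k) ℤ) (c : ℝ) : ℝ :=
  c * (((A.map (Int.cast : ℤ → ℂ)).charpoly.roots).map fun ξ => max 1 (‖ξ‖)).prod

/-- Hyperbolicity: no complex eigenvalue of `A` has modulus `1`. -/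
def Hyperbolic {k : ℕ} (A : Matrix (Fin k) (Fin k) ℤ) : Prop :=
  ∀ ξ ∈ ((A.map (Int.cast : ℤ → ℂ)).charpoly).roots, ‖ξ‖ ≠ 1

/-- The number `P_ℓ` of periodic orbits of `f` of length `ℓ`
(the set of points of minimal period `ℓ` decomposes into orbits of size `ℓ`). -/
noncomputable def orbitCount {X : Type*} (f : X → X) (l : ℕ) : ℕ :=
  Nat.card {x : X // Function.minimalPeriod f x = l} / l

/-- The orbit-counting function `π_f(N) = ∑_{ℓ ≤ N} P_ℓ`. -/
noncomputable def orbitCountBelow {X : Type*} (f : X → X) (N : ℕ) : ℕ :=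
  ∑ l ∈ Finset.Icc 1 N, orbitCount f l

/-- The set of accumulation points of a real sequence: limits of subsequences. -/
def accPoints (g : ℕ → ℝ) : Set ℝ :=
  {x : ℝ | ∃ φ : ℕ → ℕ, StrictMono φ ∧ Filter.Tendsto (fun i => g (φ i)) Filter.atTop (nhds x)}

/-- `(a n)_{n ≥ 1}` satisfies a linear recurrence for all sufficiently large `n`. -/
def SatisfiesLinearRecurrence (a : ℕ → ℂ) : Prop :=
  ∃ d : ℕ, 1 ≤ d ∧ ∃ β : Fin d → ℂ, ∃ N : ℕ, ∀ n : ℕ, N ≤ n →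
    a (n + d) = ∑ i : Fin d, β i * a (n + (i : ℕ))

/-- `(a n)_{n ≥ 1}` is holonomic: it satisfies a nontrivial recurrence with
polynomial coefficients. -/
def Holonomic (a : ℕ → ℂ) : Prop :=
  ∃ d : ℕ, ∃ q : Fin (d + 1) → Polynomial ℂ, (∃ i, q i ≠ 0) ∧
    ∀ n : ℕ, 1 ≤ n → ∑ i : Fin (d + 1), (q i).eval (n : ℂ) * a (n + (i : ℕ)) = 0

/-- The Taylor coefficients of `ζ(z) = exp (∑_{n ≥ 1} a n zⁿ / n)`, defined via the
logarithmic-derivative recursion `(n+1)·c_{n+1} = ∑_{k=0}^{n} a_{k+1} c_{n-k}`, `c₀ = 1`. -/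
noncomputable def zetaCoeff (a : ℕ → ℂ) : ℕ → ℂ
  | 0 => 1
  | n + 1 =>
    ((n : ℂ) + 1)⁻¹ * ∑ k ∈ Finset.range (n + 1), a (k + 1) * zetaCoeff a (n - k)
  termination_by n => n
  decreasing_by omega

/-- The zeta function `ζ(z) = exp (∑_{n ≥ 1} a n zⁿ / n)` of a sequence,
as a formal power series. -/
noncomputable def zetaPS (a : ℕ → ℂ) : PowerSeries ℂ := PowerSeries.mk (zetaCoeff a)

/-- A formal power series over `ℂ` is the expansion of a rational function of `ℂ(z)`. -/
def IsExpansionOfRationalC (F : PowerSeries ℂ) : Prop :=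
  ∃ P Q : Polynomial ℂ, Q ≠ 0 ∧ F * (Q : PowerSeries ℂ) = (P : PowerSeries ℂ)

/-- A formal power series over `ℂ` is the expansion of a rational function of `ℚ(z)`. -/
def IsExpansionOfRationalOverQ (F : PowerSeries ℂ) : Prop :=
  ∃ P Q : Polynomial ℚ, Q ≠ 0 ∧
    F * ((Q.map (algebraMap ℚ ℂ) : Polynomial ℂ) : PowerSeries ℂ) =
      ((P.map (algebraMap ℚ ℂ) : Polynomial ℂ) : PowerSeries ℂ)

/-- A formal power series is algebraic over `ℂ(z)` (equivalently over `ℂ[z]`):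
it satisfies a nonzero polynomial equation with coefficients in `ℂ[z]`. -/
def AlgebraicOverRatFuncs (F : PowerSeries ℂ) : Prop :=
  ∃ q : Polynomial (Polynomial ℂ), q ≠ 0 ∧
    Polynomial.eval₂ Polynomial.coeToPowerSeries.ringHom F q = 0

/-- An integer sequence is realisable if it is the fixed point count of some
set-theoretic dynamical system. -/
def Realisable (a : ℕ → ℤ) : Prop :=
  ∃ (X : Type) (f : X → X), ∀ n : ℕ, 1 ≤ n →
    (Function.fixedPoints (f^[n])).Finite ∧
    a n = (Nat.card (Function.fixedPoints (f^[n])) : ℤ)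

/-- The oscillating factor `u_n = ∏_{|ξᵢ| = 1} (ξᵢⁿ − 1)` over the eigenvalues of `A`
of modulus one. -/
noncomputable def uSeq {k : ℕ} (A : Matrix (Fin k) (Fin k) ℤ) (n : ℕ) : ℂ :=
  ((((A.map (Int.cast : ℤ → ℂ)).charpoly.roots).filter fun ξ => ‖ξ‖ = 1).map
    fun ξ => ξ ^ n - 1).prod



section Aux
open scoped Classical

lemma zetaCoeff_zero (a : ℕ → ℂ) : zetaCoeff a 0 = 1 := by rw [zetaCoeff]

lemma zetaCoeff_succ (a : ℕ → ℂ) (n : ℕ) :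
    zetaCoeff a (n+1)
      = ((n:ℂ)+1)⁻¹ * ∑ k ∈ Finset.range (n+1), a (k+1) * zetaCoeff a (n-k) := by
  rw [zetaCoeff]

lemma natCastSucc_ne (n : ℕ) : ((n:ℂ)+1) ≠ 0 := Nat.cast_add_one_ne_zero n

lemma mul_zetaCoeff_succ (a : ℕ → ℂ) (n : ℕ) :
    ((n:ℂ)+1) * zetaCoeff a (n+1)
      = ∑ k ∈ Finset.range (n+1), a (k+1) * zetaCoeff a (n-k) := by
  rw [zetaCoeff_succ, ← mul_assoc, mul_inv_cancel₀ (natCastSucc_ne n), one_mul]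

lemma zetaCoeff_congr {a b : ℕ → ℂ} (h : ∀ n, 1 ≤ n → a n = b n) :
    ∀ n, zetaCoeff a n = zetaCoeff b n := by
  intro n
  induction n using Nat.strong_induction_on with
  | _ n ih =>
    match n with
    | 0 => rw [zetaCoeff_zero, zetaCoeff_zero]
    | n+1 =>
      rw [zetaCoeff_succ, zetaCoeff_succ]
      congr 1
      refine Finset.sum_congr rfl fun k hk => ?_
      rw [h (k+1) (by omega), ih (n-k) (by omega)]

lemma zetaPS_congr {a b : ℕ → ℂ} (h : ∀ n, 1 ≤ n → a n = b n) : zetaPS a = zetaPS b := by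
  unfold zetaPS
  exact congrArg _ (funext (zetaCoeff_congr h))

lemma deriv_zetaPS (a : ℕ → ℂ) :
    PowerSeries.derivative ℂ (zetaPS a) = PowerSeries.mk (fun n => a (n+1)) * zetaPS a := by
  ext n
  rw [PowerSeries.coeff_derivative, PowerSeries.coeff_mul,
      Finset.Nat.sum_antidiagonal_eq_sum_range_succ_mk]
  simp only [zetaPS, PowerSeries.coeff_mk]
  rw [mul_comm, mul_zetaCoeff_succ]

lemma ode_unique (A P Q : PowerSeries ℂ)
    (hP : PowerSeries.derivative ℂ P = A * P) (hQ : PowerSeries.derivative ℂ Q = A * Q)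
    (h0 : PowerSeries.coeff 0 P = PowerSeries.coeff 0 Q) : P = Q := by
  ext n
  induction n using Nat.strong_induction_on with
  | _ n ih =>
    match n with
    | 0 => exact h0
    | n+1 =>
      have hP' := congrArg (PowerSeries.coeff n) hP
      have hQ' := congrArg (PowerSeries.coeff n) hQ
      rw [PowerSeries.coeff_derivative] at hP' hQ'
      have key : (PowerSeries.coeff (n+1)) P * ((n:ℂ)+1)
          = (PowerSeries.coeff (n+1)) Q * ((n:ℂ)+1) := by
        rw [hP', hQ', PowerSeries.coeff_mul, PowerSeries.coeff_mul]
        refine Finset.sum_congr rfl fun p hp => ?_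
        have : p.1 + p.2 = n := Finset.HasAntidiagonal.mem_antidiagonal.mp hp
        rw [ih p.2 (by omega)]
      exact mul_right_cancel₀ (natCastSucc_ne n) key

lemma zetaPS_coeff_zero (a : ℕ → ℂ) : PowerSeries.coeff 0 (zetaPS a) = 1 := by
  simp [zetaPS, zetaCoeff]

lemma zetaPS_add (f g : ℕ → ℂ) :
    zetaPS (fun n => f n + g n) = zetaPS f * zetaPS g := by
  apply ode_unique (PowerSeries.mk fun n => f (n+1) + g (n+1))
  · rw [deriv_zetaPS]
  · rw [Derivation.leibniz, deriv_zetaPS, deriv_zetaPS, smul_eq_mul, smul_eq_mul]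
    have h : (PowerSeries.mk fun n => f (n+1) + g (n+1))
        = PowerSeries.mk (fun n => f (n+1)) + PowerSeries.mk (fun n => g (n+1)) := by
      ext n; simp
    rw [h]; ring
  · rw [zetaPS_coeff_zero, PowerSeries.coeff_mul]
    simp [zetaPS_coeff_zero]

lemma zetaPS_zero : zetaPS (fun _ => 0) = 1 := by
  ext n
  match n with
  | 0 => simp [zetaPS_coeff_zero]
  | n+1 =>
    simp only [zetaPS, PowerSeries.coeff_mk, zetaCoeff_succ, PowerSeries.coeff_one]
    simp

lemma zetaPS_sum {ι : Type*} (S : Finset ι) (f : ι → ℕ → ℂ) :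
    zetaPS (fun n => ∑ t ∈ S, f t n) = ∏ t ∈ S, zetaPS (f t) := by
  induction S using Finset.cons_induction with
  | empty => simpa using zetaPS_zero
  | cons t S ht ih =>
    have h : (fun n => ∑ r ∈ Finset.cons t S ht, f r n)
        = fun n => f t n + ∑ r ∈ S, f r n := by
      funext n; rw [Finset.sum_cons]
    rw [h, zetaPS_add, ih, Finset.prod_cons]

lemma zetaCoeff_geom (l : ℂ) : ∀ n, zetaCoeff (fun m => l ^ m) n = l ^ n := by
  intro n
  induction n using Nat.strong_induction_on with
  | _ n ih =>
    match n with
    | 0 => simp [zetaCoeff_zero]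
    | n+1 =>
      rw [zetaCoeff_succ]
      have : ∀ k ∈ Finset.range (n+1),
          l ^ (k+1) * zetaCoeff (fun m => l ^ m) (n-k) = l ^ (n+1) := by
        intro k hk
        have hk' : k ≤ n := by simpa using Nat.lt_succ_iff.mp (Finset.mem_range.mp hk)
        rw [ih (n-k) (by omega), ← pow_add]
        congr 1
        omega
      rw [Finset.sum_congr rfl this, Finset.sum_const, Finset.card_range, nsmul_eq_mul,
        ← mul_assoc]
      rw [show ((n+1 : ℕ) : ℂ) = (n : ℂ) + 1 by push_cast; ring,
        inv_mul_cancel₀ (natCastSucc_ne n), one_mul]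

lemma zetaPS_geom_mul (l : ℂ) :
    zetaPS (fun m => l ^ m) * (1 - PowerSeries.C l * PowerSeries.X) = 1 := by
  have hz : zetaPS (fun m => l ^ m) = PowerSeries.mk (fun m => l ^ m) := by
    unfold zetaPS
    exact congrArg _ (funext (zetaCoeff_geom l))
  rw [hz]
  ext n
  match n with
  | 0 => simp
  | n+1 =>
    rw [mul_sub, mul_one, map_sub]
    have hX : PowerSeries.mk (fun m => l ^ m) * (PowerSeries.C l * PowerSeries.X)
        = PowerSeries.C l * (PowerSeries.X * PowerSeries.mk (fun m => l ^ m)) := by ring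
    rw [hX, PowerSeries.coeff_C_mul, PowerSeries.coeff_succ_X_mul]
    simp [pow_succ, mul_comm]

lemma zetaPS_neg_geom (l : ℂ) :
    zetaPS (fun m => -(l ^ m)) = 1 - PowerSeries.C l * PowerSeries.X := by
  have h1 : zetaPS (fun m => l ^ m) * zetaPS (fun m => -(l ^ m)) = 1 := by
    rw [← zetaPS_add]
    have : (fun n => l ^ n + -(l ^ n)) = fun _ : ℕ => (0 : ℂ) := by ext n; ring
    rw [this, zetaPS_zero]
  have h2 := zetaPS_geom_mul l
  calc zetaPS (fun m => -(l ^ m))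
      = zetaPS (fun m => -(l ^ m)) * (zetaPS (fun m => l ^ m) * (1 - PowerSeries.C l * PowerSeries.X)) := by
        rw [h2, mul_one]
    _ = (zetaPS (fun m => l ^ m) * zetaPS (fun m => -(l ^ m))) * (1 - PowerSeries.C l * PowerSeries.X) := by ring
    _ = 1 - PowerSeries.C l * PowerSeries.X := by rw [h1, one_mul]

lemma one_sub_CX_ne (l : ℂ) : (1 - Polynomial.C l * Polynomial.X : Polynomial ℂ) ≠ 0 := by
  intro h
  have := congrArg (Polynomial.eval 0) h
  simp at this

lemma coe_one_sub (l : ℂ) :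
    ((1 - Polynomial.C l * Polynomial.X : Polynomial ℂ) : PowerSeries ℂ)
      = 1 - PowerSeries.C l * PowerSeries.X := by
  rw [Polynomial.coe_sub, Polynomial.coe_one, Polynomial.coe_mul, Polynomial.coe_C,
    Polynomial.coe_X]

lemma coePS_prod {ι : Type*} (S : Finset ι) (f : ι → Polynomial ℂ) :
    ((∏ T ∈ S, f T : Polynomial ℂ) : PowerSeries ℂ)
      = ∏ T ∈ S, ((f T : Polynomial ℂ) : PowerSeries ℂ) := by
  induction S using Finset.cons_induction with
  | empty => simp [Polynomial.coe_one]
  | cons t S ht ih => rw [Finset.prod_cons, Finset.prod_cons, Polynomial.coe_mul, ih]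

lemma rational_of_signed_geom {ι : Type*} (S : Finset ι) (lam : ι → ℂ) (m : ι → ℕ)
    (b : ℕ → ℂ) (hb : ∀ n, 1 ≤ n → b n = ∑ T ∈ S, (-1:ℂ)^(m T) * lam T ^ n) :
    IsExpansionOfRationalC (zetaPS b) := by
  classical
  have hz : zetaPS b = ∏ T ∈ S, zetaPS (fun n => (-1:ℂ)^(m T) * lam T ^ n) := by
    rw [zetaPS_congr hb, zetaPS_sum]
  set Sp := S.filter (fun T => Even (m T)) with hSp
  set Sm := S.filter (fun T => ¬ Even (m T)) with hSm
  refine ⟨∏ T ∈ Sm, (1 - Polynomial.C (lam T) * Polynomial.X),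
         ∏ T ∈ Sp, (1 - Polynomial.C (lam T) * Polynomial.X),
         Finset.prod_ne_zero_iff.mpr fun T _ => one_sub_CX_ne _, ?_⟩
  rw [coePS_prod, coePS_prod]
  have hsplit : S = Sp ∪ Sm := by
    rw [hSp, hSm, Finset.filter_union_filter_not_eq]
  have hdisj : Disjoint Sp Sm := by
    rw [hSp, hSm]; exact Finset.disjoint_filter_filter_not S S _
  have hzp : ∀ T ∈ Sp, zetaPS (fun n => (-1:ℂ)^(m T) * lam T ^ n)
      = zetaPS (fun n => lam T ^ n) := by
    intro T hT
    have he : Even (m T) := (Finset.mem_filter.mp hT).2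
    have harg : (fun n : ℕ => (-1:ℂ)^(m T) * lam T ^ n) = fun n => lam T ^ n := by
      funext n; rw [he.neg_one_pow, one_mul]
    rw [harg]
  have hzm : ∀ T ∈ Sm, zetaPS (fun n => (-1:ℂ)^(m T) * lam T ^ n)
      = 1 - PowerSeries.C (lam T) * PowerSeries.X := by
    intro T hT
    have ho : Odd (m T) := Nat.odd_iff.mpr (Nat.not_even_iff.mp (Finset.mem_filter.mp hT).2)
    have : (fun n => (-1:ℂ)^(m T) * lam T ^ n) = fun n => -(lam T ^ n) := by
      funext n
      rw [ho.neg_one_pow]; ring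
    rw [this, zetaPS_neg_geom]
  rw [hz, hsplit, Finset.prod_union hdisj,
    Finset.prod_congr rfl hzp, Finset.prod_congr rfl hzm]
  have key : (∏ T ∈ Sp, zetaPS (fun n => lam T ^ n))
      * ∏ T ∈ Sp, (((1 - Polynomial.C (lam T) * Polynomial.X : Polynomial ℂ)) : PowerSeries ℂ)
      = 1 := by
    rw [← Finset.prod_mul_distrib]
    refine Finset.prod_eq_one fun T _ => ?_
    rw [coe_one_sub]
    exact zetaPS_geom_mul (lam T)
  calc (∏ T ∈ Sp, zetaPS fun n => lam T ^ n)
        * (∏ T ∈ Sm, (1 - PowerSeries.C (lam T) * PowerSeries.X))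
        * ∏ T ∈ Sp, (((1 - Polynomial.C (lam T) * Polynomial.X : Polynomial ℂ)) : PowerSeries ℂ)
      = ((∏ T ∈ Sp, zetaPS fun n => lam T ^ n)
          * ∏ T ∈ Sp, (((1 - Polynomial.C (lam T) * Polynomial.X : Polynomial ℂ)) : PowerSeries ℂ))
        * ∏ T ∈ Sm, (1 - PowerSeries.C (lam T) * PowerSeries.X) := by ring
    _ = ∏ T ∈ Sm, (((1 - Polynomial.C (lam T) * Polynomial.X : Polynomial ℂ)) : PowerSeries ℂ) := by
        rw [key, one_mul]
        exact Finset.prod_congr rfl fun T _ => (coe_one_sub (lam T)).symm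



noncomputable def mte1 (M : Multiset ℂ) : ℕ :=
  (M.filter (fun z => z.im = 0 ∧ -1 < z.re ∧ z.re < 1)).card

noncomputable def mte2 (M : Multiset ℂ) : ℕ :=
  (M.filter (fun z => z.im = 0 ∧ z.re < -1)).card

lemma mte1_cons_pos {z : ℂ} (M : Multiset ℂ) (h : z.im = 0 ∧ -1 < z.re ∧ z.re < 1) :
    mte1 (z ::ₘ M) = mte1 M + 1 := by
  unfold mte1
  rw [Multiset.filter_cons_of_pos (p := fun z : ℂ => z.im = 0 ∧ -1 < z.re ∧ z.re < 1) _ h,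
    Multiset.card_cons]

lemma mte1_cons_neg {z : ℂ} (M : Multiset ℂ) (h : ¬(z.im = 0 ∧ -1 < z.re ∧ z.re < 1)) :
    mte1 (z ::ₘ M) = mte1 M := by
  unfold mte1
  rw [Multiset.filter_cons_of_neg (p := fun z : ℂ => z.im = 0 ∧ -1 < z.re ∧ z.re < 1) _ h]

lemma mte2_cons_pos {z : ℂ} (M : Multiset ℂ) (h : z.im = 0 ∧ z.re < -1) :
    mte2 (z ::ₘ M) = mte2 M + 1 := by
  unfold mte2
  rw [Multiset.filter_cons_of_pos (p := fun z : ℂ => z.im = 0 ∧ z.re < -1) _ h,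
    Multiset.card_cons]

lemma mte2_cons_neg {z : ℂ} (M : Multiset ℂ) (h : ¬(z.im = 0 ∧ z.re < -1)) :
    mte2 (z ::ₘ M) = mte2 M := by
  unfold mte2
  rw [Multiset.filter_cons_of_neg (p := fun z : ℂ => z.im = 0 ∧ z.re < -1) _ h]

lemma neg_one_pow_le_one (n : ℕ) : (-1 : ℝ) ^ n ≤ 1 := by
  rcases Nat.even_or_odd n with h | h
  · rw [h.neg_one_pow]
  · rw [h.neg_one_pow]; norm_num

lemma sign_lemma (M : Multiset ℂ)
    (hconj : M.map (starRingEnd ℂ) = M)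
    (hroot : ∀ z ∈ M, ∀ m : ℕ, 1 ≤ m → z ^ m ≠ 1)
    (n : ℕ) (hn : 1 ≤ n) :
    ∃ r : ℝ, 0 < r ∧
      (M.map (fun z => z ^ n - 1)).prod = (r : ℂ) * (-1) ^ (mte1 M + mte2 M * n) := by
  induction M using Multiset.strongInductionOn with
  | _ M ih =>
  rcases Multiset.empty_or_exists_mem M with hM | ⟨z, hz⟩
  · subst hM
    exact ⟨1, one_pos, by simp [mte1, mte2]⟩
  obtain ⟨M', rfl⟩ := Multiset.exists_cons_of_mem hz
  by_cases him : z.im = 0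
  · -- real eigenvalue
    have hconjz : (starRingEnd ℂ) z = z := Complex.conj_eq_iff_im.mpr him
    have hM' : M'.map (starRingEnd ℂ) = M' := by
      have h1 := hconj
      rw [Multiset.map_cons, hconjz] at h1
      exact (Multiset.cons_inj_right z).mp h1
    have hroot' : ∀ w ∈ M', ∀ m : ℕ, 1 ≤ m → w ^ m ≠ 1 := fun w hw =>
      hroot w (Multiset.mem_cons_of_mem hw)
    obtain ⟨r, hr, hprod⟩ := ih M' (Multiset.lt_cons_self M' z) hM' hroot'
    set x := z.re with hx
    have hzx : z = (x : ℂ) := by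
      apply Complex.ext
      · simp [hx]
      · simp [him]
    have hx1 : x ≠ 1 := by
      intro h
      exact hroot z hz 1 le_rfl (by rw [pow_one, hzx, h]; norm_num)
    have hxm1 : x ≠ -1 := by
      intro h
      exact hroot z hz 2 (by norm_num) (by rw [hzx, h]; norm_num)
    have hfac : z ^ n - 1 = ((x ^ n - 1 : ℝ) : ℂ) := by rw [hzx]; push_cast; ring
    have hmapprod : ((z ::ₘ M').map (fun z => z ^ n - 1)).prod
        = (z ^ n - 1) * (M'.map (fun z => z ^ n - 1)).prod := by
      rw [Multiset.map_cons, Multiset.prod_cons]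
    rcases lt_trichotomy x (-1) with hc | hc | hc
    · -- x < -1
      have he1 : mte1 (z ::ₘ M') = mte1 M' :=
        mte1_cons_neg M' (by rintro ⟨-, h2, -⟩; rw [← hx] at h2; linarith)
      have he2 : mte2 (z ::ₘ M') = mte2 M' + 1 := mte2_cons_pos M' ⟨him, hc⟩
      have hy : (1 : ℝ) < -x := by linarith
      have hpos : 0 < ((-x) ^ n - (-1 : ℝ) ^ n) := by
        have h1 : (1 : ℝ) < (-x) ^ n := one_lt_pow₀ hy (by omega)
        have h2 := neg_one_pow_le_one n
        linarith
      refine ⟨((-x) ^ n - (-1 : ℝ) ^ n) * r, mul_pos hpos hr, ?_⟩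
      have keyC : ((-(x:ℂ)) ^ n - (-1 : ℂ) ^ n) * (-1 : ℂ) ^ n = (x:ℂ) ^ n - 1 := by
        rw [sub_mul, ← mul_pow, ← mul_pow]; norm_num
      have hkey : ((x ^ n - 1 : ℝ) : ℂ) = (((-x) ^ n - (-1:ℝ) ^ n : ℝ) : ℂ) * (-1 : ℂ) ^ n := by
        have h2 : ((-1:ℂ)) ^ (n * 2) = 1 := by
          rw [mul_comm, pow_mul]; norm_num
        push_cast
        linear_combination keyC - 2 * ((x:ℂ) ^ n - 1) * h2
      rw [hmapprod, hfac, hprod, he1, he2,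
        show mte1 M' + (mte2 M' + 1) * n = (mte1 M' + mte2 M' * n) + n by ring, pow_add, hkey]
      push_cast
      ring
    · exact absurd hc hxm1
    rcases lt_trichotomy x 1 with hc2 | hc2 | hc2
    · -- -1 < x < 1
      have he1 : mte1 (z ::ₘ M') = mte1 M' + 1 := mte1_cons_pos M' ⟨him, hc, hc2⟩
      have he2 : mte2 (z ::ₘ M') = mte2 M' :=
        mte2_cons_neg M' (by rintro ⟨-, h2⟩; rw [← hx] at h2; linarith)
      have habs : |x| < 1 := abs_lt.mpr ⟨hc, hc2⟩
      have hpos : 0 < 1 - x ^ n := by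
        have h1 : x ^ n ≤ |x ^ n| := le_abs_self _
        have h2 : |x ^ n| < 1 := by
          rw [abs_pow]; exact pow_lt_one₀ (abs_nonneg x) habs (by omega)
        linarith
      refine ⟨(1 - x ^ n) * r, mul_pos hpos hr, ?_⟩
      rw [hmapprod, hfac, hprod, he1, he2,
        show mte1 M' + 1 + mte2 M' * n = (mte1 M' + mte2 M' * n) + 1 by ring, pow_succ]
      push_cast
      ring
    · exact absurd hc2 hx1
    · -- 1 < x
      have he1 : mte1 (z ::ₘ M') = mte1 M' :=
        mte1_cons_neg M' (by rintro ⟨-, -, h3⟩; rw [← hx] at h3; linarith)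
      have he2 : mte2 (z ::ₘ M') = mte2 M' :=
        mte2_cons_neg M' (by rintro ⟨-, h2⟩; rw [← hx] at h2; linarith)
      have hpos : 0 < x ^ n - 1 := by
        have h1 : (1 : ℝ) < x ^ n := one_lt_pow₀ hc2 (by omega)
        linarith
      refine ⟨(x ^ n - 1) * r, mul_pos hpos hr, ?_⟩
      rw [hmapprod, hfac, hprod, he1, he2]
      push_cast
      ring
  · -- complex eigenvalue
    have hwz : (starRingEnd ℂ) z ∈ z ::ₘ M' := by
      rw [← hconj]; exact Multiset.mem_map_of_mem _ hz
    have hne : (starRingEnd ℂ) z ≠ z := fun h => him (Complex.conj_eq_iff_im.mp h)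
    have hwM' : (starRingEnd ℂ) z ∈ M' := by
      rcases Multiset.mem_cons.mp hwz with h | h
      · exact absurd h hne
      · exact h
    obtain ⟨M'', rfl⟩ := Multiset.exists_cons_of_mem hwM'
    have hM'' : M''.map (starRingEnd ℂ) = M'' := by
      have h1 := hconj
      rw [Multiset.map_cons, Multiset.map_cons, Complex.conj_conj] at h1
      rw [Multiset.cons_swap] at h1
      exact (Multiset.cons_inj_right _).mp ((Multiset.cons_inj_right _).mp h1)
    have hroot'' : ∀ w ∈ M'', ∀ m : ℕ, 1 ≤ m → w ^ m ≠ 1 := fun w hw =>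
      hroot w (Multiset.mem_cons_of_mem (Multiset.mem_cons_of_mem hw))
    have hlt : M'' < z ::ₘ (starRingEnd ℂ) z ::ₘ M'' :=
      lt_trans (Multiset.lt_cons_self M'' _) (Multiset.lt_cons_self _ z)
    obtain ⟨r, hr, hprod⟩ := ih M'' hlt hM'' hroot''
    have hpair : (z ^ n - 1) * (((starRingEnd ℂ) z) ^ n - 1)
        = (Complex.normSq (z ^ n - 1) : ℂ) := by
      have h1 : ((starRingEnd ℂ) z) ^ n - 1 = (starRingEnd ℂ) (z ^ n - 1) := by
        rw [map_sub, map_pow, map_one]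
      rw [h1, Complex.mul_conj]
    have hpos : 0 < Complex.normSq (z ^ n - 1) :=
      Complex.normSq_pos.mpr (sub_ne_zero.mpr (hroot z hz n hn))
    have hcim : ((starRingEnd ℂ) z).im ≠ 0 := by
      rw [Complex.conj_im]; exact fun h => him (by linarith [neg_eq_zero.mp h])
    have he1 : mte1 (z ::ₘ (starRingEnd ℂ) z ::ₘ M'') = mte1 M'' := by
      rw [mte1_cons_neg _ (by rintro ⟨h1, -⟩; exact him h1),
        mte1_cons_neg _ (by rintro ⟨h1, -⟩; exact hcim h1)]
    have he2 : mte2 (z ::ₘ (starRingEnd ℂ) z ::ₘ M'') = mte2 M'' := by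
      rw [mte2_cons_neg _ (by rintro ⟨h1, -⟩; exact him h1),
        mte2_cons_neg _ (by rintro ⟨h1, -⟩; exact hcim h1)]
    refine ⟨Complex.normSq (z ^ n - 1) * r, mul_pos hpos hr, ?_⟩
    rw [Multiset.map_cons, Multiset.prod_cons, Multiset.map_cons, Multiset.prod_cons,
      ← mul_assoc, hpair, hprod, he1, he2]
    push_cast
    ring

end Aux

/-- sign of a real sequence of multiplicative type, and rationality of
the zeta function of its absolute values. -/
theorem multiplicative_type_sign (s : ℕ) (ξ : Fin s → ℂ)
    (hroot : ∀ i : Fin s, ∀ m : ℕ, 1 ≤ m → ξ i ^ m ≠ 1)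
    (hconj : (Finset.univ.val.map fun i => (starRingEnd ℂ) (ξ i)) = Finset.univ.val.map ξ)
    (a : ℕ → ℂ) (ha : ∀ n : ℕ, a n = ∏ i : Fin s, (ξ i ^ n - 1)) :
    (∀ n : ℕ, 1 ≤ n → (a n).im = 0 ∧ a n ≠ 0 ∧
      (0 < (a n).re ↔
        Even (Nat.card {i : Fin s // (ξ i).im = 0 ∧ -1 < (ξ i).re ∧ (ξ i).re < 1} +
          Nat.card {i : Fin s // (ξ i).im = 0 ∧ (ξ i).re < -1} * n))) ∧
    IsExpansionOfRationalC (zetaPS fun n => ((‖a n‖ : ℝ) : ℂ)) := by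
  classical
  set M : Multiset ℂ := Finset.univ.val.map ξ with hM
  have hMconj : M.map (starRingEnd ℂ) = M := by
    rw [hM, Multiset.map_map]
    exact hconj
  have hMroot : ∀ z ∈ M, ∀ m : ℕ, 1 ≤ m → z ^ m ≠ 1 := by
    intro z hz m hm
    rw [hM] at hz
    obtain ⟨i, -, rfl⟩ := Multiset.mem_map.mp hz
    exact hroot i m hm
  have hcard1 : Nat.card {i : Fin s // (ξ i).im = 0 ∧ -1 < (ξ i).re ∧ (ξ i).re < 1}
      = mte1 M := by
    rw [Nat.card_eq_fintype_card, Fintype.card_subtype]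
    unfold mte1
    rw [hM, Multiset.filter_map, Multiset.card_map]
    rfl
  have hcard2 : Nat.card {i : Fin s // (ξ i).im = 0 ∧ (ξ i).re < -1} = mte2 M := by
    rw [Nat.card_eq_fintype_card, Fintype.card_subtype]
    unfold mte2
    rw [hM, Multiset.filter_map, Multiset.card_map]
    rfl
  have hrep : ∀ n : ℕ, 1 ≤ n → ∃ r : ℝ, 0 < r ∧
      a n = (r : ℂ) * (-1) ^ (mte1 M + mte2 M * n) := by
    intro n hn
    obtain ⟨r, hr, hp⟩ := sign_lemma M hMconj hMroot n hn
    refine ⟨r, hr, ?_⟩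
    rw [ha n, ← hp, hM, Multiset.map_map]
    rfl
  constructor
  · intro n hn
    obtain ⟨r, hr, hp⟩ := hrep n hn
    set k := mte1 M + mte2 M * n with hk
    have hcast : a n = ((r * (-1) ^ k : ℝ) : ℂ) := by rw [hp]; push_cast; ring
    refine ⟨by rw [hcast, Complex.ofReal_im], ?_, ?_⟩
    · rw [hcast]
      intro h
      have h1 : r * (-1 : ℝ) ^ k = 0 := by exact_mod_cast h
      rcases mul_eq_zero.mp h1 with h2 | h2
      · exact hr.ne' h2
      · exact (by positivity : (0:ℝ) < ((-1:ℝ)^k)^2).ne' (by rw [h2]; ring)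
    · have hre : (a n).re = r * (-1 : ℝ) ^ k := by rw [hcast, Complex.ofReal_re]
      rw [hre, hcard1, hcard2, ← hk]
      rcases Nat.even_or_odd k with hek | hok
      · rw [hek.neg_one_pow]
        simpa using ⟨fun _ => hek, fun _ => hr⟩
      · rw [hok.neg_one_pow]
        constructor
        · intro h; nlinarith
        · intro h; exact absurd h (Nat.not_even_iff_odd.mpr hok)
  · -- rationality
    have habs : ∀ n : ℕ, 1 ≤ n → ((‖a n‖ : ℝ) : ℂ)
        = (-1 : ℂ) ^ (mte1 M + mte2 M * n) * a n := by
      intro n hn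
      obtain ⟨r, hr, hp⟩ := hrep n hn
      set k := mte1 M + mte2 M * n with hk
      have h1 : (-1 : ℂ) ^ (mte1 M * 2) = 1 := by
        rw [mul_comm, pow_mul]; norm_num
      have h2 : (-1 : ℂ) ^ (mte2 M * n * 2) = 1 := by
        rw [mul_comm, pow_mul]; norm_num
      have habsval : ‖a n‖ = r := by
        rw [hp, norm_mul, norm_pow]
        simp [abs_of_pos hr]
      rw [habsval, hp]
      push_cast
      linear_combination (-(r : ℂ) * (-1 : ℂ) ^ (mte2 M * n * 2)) * h1 + (-(r : ℂ)) * h2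
    have hexp : ∀ n : ℕ, 1 ≤ n → ((‖a n‖ : ℝ) : ℂ)
        = ∑ T ∈ (Finset.univ : Finset (Fin s)).powerset,
            (-1 : ℂ) ^ (mte1 M + (Finset.univ \ T).card)
              * ((-1 : ℂ) ^ (mte2 M) * ∏ i ∈ T, ξ i) ^ n := by
      intro n hn
      rw [habs n hn, ha n]
      have hprodadd : ∏ i : Fin s, (ξ i ^ n - 1)
          = ∑ T ∈ (Finset.univ : Finset (Fin s)).powerset,
              (∏ i ∈ T, ξ i ^ n) * (-1 : ℂ) ^ ((Finset.univ \ T).card) := by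
        have h := Finset.prod_add (fun i : Fin s => ξ i ^ n) (fun _ => (-1 : ℂ)) Finset.univ
        simp only [Finset.prod_const] at h
        rw [← h]
        exact Finset.prod_congr rfl fun i _ => by ring
      rw [hprodadd, Finset.mul_sum]
      refine Finset.sum_congr rfl fun T hT => ?_
      rw [mul_pow, ← Finset.prod_pow, ← pow_mul, pow_add]
      ring
    exact rational_of_signed_geom (Finset.univ : Finset (Fin s)).powerset
      (fun T => (-1 : ℂ) ^ (mte2 M) * ∏ i ∈ T, ξ i)
      (fun T => mte1 M + (Finset.univ \ T).card)
      (fun n => ((‖a n‖ : ℝ) : ℂ)) hexp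
end

section
/- Let K be a field, let |·| be a nonarchimedean absolute value on K, and let ξ ∈ K be an element that is not a root of unity. Then: (1) if |ξ| > 1, then |ξ^n − 1| = |ξ|^n for all n ≥ 1 (so |ξ^n − 1| = c^n with c := |ξ| > 1); (2) if |ξ| ≤ 1, K has characteristic 0, and |m·1_K| = 1 for every nonzero integer m (i.e. the residue field of |·| has characteristic 0), then there is a gcd sequence (r_n) with values in ℝ_{>0} such that |ξ^n − 1| = r_n for all n ≥ 1; (3) if |ξ| ≤ 1, K has characteristic 0, and |p·1_K| < 1 for a prime number p (i.e. the residue field has characteristic p), then there are gcd sequences (r_n) with values in ℝ_{>0} and (s_n) with values in ℝ_{≥0} and of period coprime to p such that |ξ^n − 1| = r_n·|n|_p^{s_n} for all n ≥ 1; (4) if |ξ| ≤ 1 and K has characteristic p > 0, then there is a gcd sequence (t_n) with values in ℝ_{≥0} and of period coprime to p such that |ξ^n − 1| = p^{−t_n·|n|_p^{−1}} for all n ≥ 1. -/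
open scoped BigOperators
open Filter

section NonarchAux

variable {K : Type*} [Field K] (v : AbsoluteValue K ℝ)

lemma na_add_eq (hna : ∀ x y : K, v (x + y) ≤ max (v x) (v y))
    {x y : K} (h : v y < v x) : v (x + y) = v x := by
  refine le_antisymm ((hna x y).trans (max_le le_rfl h.le)) ?_
  have h2 := hna (x + y) (-y)
  rw [add_neg_cancel_right, v.map_neg] at h2
  rcases max_cases (v (x + y)) (v y) with ⟨he, _⟩ | ⟨he, hle⟩
  · rw [he] at h2; exact h2
  · rw [he] at h2; exact absurd h2 (not_le.mpr h)

lemma na_sub_le (hna : ∀ x y : K, v (x + y) ≤ max (v x) (v y)) (a b : K) :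
    v (a - b) ≤ max (v a) (v b) := by
  rw [sub_eq_add_neg]
  simpa [v.map_neg] using hna a (-b)

lemma na_sum_le (hna : ∀ x y : K, v (x + y) ≤ max (v x) (v y)) {c : ℝ} (hc : 0 ≤ c)
    {ι : Type*} (s : Finset ι) (f : ι → K)
    (hf : ∀ i ∈ s, v (f i) ≤ c) : v (∑ i ∈ s, f i) ≤ c := by
  induction s using Finset.cons_induction_on with
  | empty => simpa using hc
  | cons _ _ hmem ih =>
    rw [Finset.sum_cons]
    exact (hna _ _).trans (max_le (hf _ (Finset.mem_cons_self _ _))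
      (ih fun i hi => hf i (Finset.mem_cons_of_mem hi)))

lemma na_natCast_le_one (hna : ∀ x y : K, v (x + y) ≤ max (v x) (v y)) (m : ℕ) :
    v ((m : K)) ≤ 1 := by
  induction m with
  | zero => simpa using zero_le_one
  | succ k ih =>
    push_cast
    exact (hna (k : K) 1).trans (by simp [ih])

lemma na_intCast_le_one (hna : ∀ x y : K, v (x + y) ≤ max (v x) (v y)) (a : ℤ) :
    v ((a : K)) ≤ 1 := by
  rcases Int.natAbs_eq a with h | h
  · rw [h, Int.cast_natCast]; exact na_natCast_le_one v hna _
  · rw [h, Int.cast_neg, v.map_neg, Int.cast_natCast]; exact na_natCast_le_one v hna _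

lemma na_w_le_one (hna : ∀ x y : K, v (x + y) ≤ max (v x) (v y))
    {ξ : K} (hξ : v ξ ≤ 1) (n : ℕ) : v (ξ ^ n - 1) ≤ 1 := by
  refine (na_sub_le v hna _ _).trans (max_le ?_ (by simp))
  rw [v.map_pow]
  exact pow_le_one₀ (v.nonneg _) hξ

lemma na_geom_id (ξ : K) (n m : ℕ) :
    ξ ^ (n * m) - 1 = (ξ ^ n - 1) * ∑ k ∈ Finset.range m, (ξ ^ n) ^ k := by
  rw [pow_mul, mul_comm, geom_sum_mul]

lemma na_w_mul_le (hna : ∀ x y : K, v (x + y) ≤ max (v x) (v y))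
    {ξ : K} (hξ : v ξ ≤ 1) (n m : ℕ) :
    v (ξ ^ (n * m) - 1) ≤ v (ξ ^ n - 1) := by
  rw [na_geom_id, v.map_mul]
  refine mul_le_of_le_one_right (v.nonneg _) ?_
  refine na_sum_le v hna zero_le_one _ _ fun i _ => ?_
  rw [v.map_pow, v.map_pow]
  exact pow_le_one₀ (pow_nonneg (v.nonneg ξ) n) (pow_le_one₀ (v.nonneg ξ) hξ)

lemma na_sum_sub (hna : ∀ x y : K, v (x + y) ≤ max (v x) (v y))
    {ξ : K} (hξ : v ξ ≤ 1) (n m : ℕ) :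
    v ((∑ k ∈ Finset.range m, (ξ ^ n) ^ k) - (m : K)) ≤ v (ξ ^ n - 1) := by
  have hid : (∑ k ∈ Finset.range m, (ξ ^ n) ^ k) - (m : K)
      = ∑ k ∈ Finset.range m, ((ξ ^ n) ^ k - 1) := by
    rw [Finset.sum_sub_distrib]
    simp
  rw [hid]
  refine na_sum_le v hna (v.nonneg _) _ _ fun k _ => ?_
  have := na_w_mul_le v hna hξ n k
  rwa [pow_mul] at this

lemma na_lemA (hna : ∀ x y : K, v (x + y) ≤ max (v x) (v y))
    {ξ : K} (hξ : v ξ ≤ 1) {n m : ℕ}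
    (h : v (ξ ^ n - 1) < v ((m : K))) :
    v (ξ ^ (n * m) - 1) = v (ξ ^ n - 1) * v ((m : K)) := by
  rw [na_geom_id, v.map_mul]
  congr 1
  have hG : (∑ k ∈ Finset.range m, (ξ ^ n) ^ k)
      = (m : K) + ((∑ k ∈ Finset.range m, (ξ ^ n) ^ k) - (m : K)) := by ring
  rw [hG, na_add_eq v hna (lt_of_le_of_lt (na_sum_sub v hna hξ n m) h)]

lemma na_w_eq_one_of_lt (hna : ∀ x y : K, v (x + y) ≤ max (v x) (v y))
    {ξ : K} (hξ : v ξ < 1) {n : ℕ} (hn : 1 ≤ n) :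
    v (ξ ^ n - 1) = 1 := by
  have h : v (ξ ^ n) < v (-1 : K) := by
    rw [v.map_neg, v.map_one, v.map_pow]
    exact pow_lt_one₀ (v.nonneg _) hξ (by omega)
  have h2 := na_add_eq v hna h
  rw [neg_add_eq_sub] at h2
  rwa [v.map_neg, v.map_one] at h2

lemma na_not_dvd_eq_one (hna : ∀ x y : K, v (x + y) ≤ max (v x) (v y))
    {ξ : K} (hv1 : v ξ = 1) {d : ℕ} (hd1 : 1 ≤ d)
    (hdlt : v (ξ ^ d - 1) < 1)
    (hmin : ∀ k, 1 ≤ k → v (ξ ^ k - 1) < 1 → d ≤ k)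
    {n : ℕ} (hn : 1 ≤ n) (hnd : ¬ d ∣ n) : v (ξ ^ n - 1) = 1 := by
  refine le_antisymm (na_w_le_one v hna hv1.le n) (not_lt.mp fun hlt => ?_)
  set q := n / d with hq
  set r := n % d with hr
  have hrne : r ≠ 0 := fun h0 => hnd (Nat.dvd_of_mod_eq_zero h0)
  have hrd : r < d := Nat.mod_lt n (by omega)
  have hsum : d * q + r = n := Nat.div_add_mod n d
  have hq1 : v (ξ ^ (d * q) - 1) < 1 := lt_of_le_of_lt (na_w_mul_le v hna hv1.le d q) hdlt
  have hkey : ξ ^ (d * q) * (ξ ^ r - 1) = (ξ ^ n - 1) - (ξ ^ (d * q) - 1) := by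
    have : ξ ^ n = ξ ^ (d * q) * ξ ^ r := by rw [← pow_add, hsum]
    rw [this]; ring
  have hvp : v (ξ ^ (d * q)) = 1 := by rw [v.map_pow, hv1, one_pow]
  have hwr : v (ξ ^ r - 1) < 1 := by
    have := congrArg v hkey
    rw [v.map_mul, hvp, one_mul] at this
    rw [this]
    exact lt_of_le_of_lt (na_sub_le v hna _ _) (max_lt hlt hq1)
  exact absurd (hmin r (by omega) hwr) (not_le.mpr hrd)

lemma na_binom (hna : ∀ x y : K, v (x + y) ≤ max (v x) (v y))
    {ξ : K} (hξ : v ξ ≤ 1) {p : ℕ} (hp : p.Prime) (N : ℕ) :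
    v (ξ ^ (N * p) - 1 - (ξ ^ N - 1) ^ p) ≤ v ((p : K)) * v (ξ ^ N - 1) := by
  set η := ξ ^ N - 1 with hη
  have h1 : ξ ^ (N * p) = (η + 1) ^ p := by
    rw [pow_mul]; congr 1; rw [hη]; ring
  have h2 : (η + 1 : K) ^ p = ∑ k ∈ Finset.range (p + 1), η ^ k * (p.choose k : K) := by
    rw [add_pow]; simp
  have h3 : ∑ k ∈ Finset.range (p + 1), η ^ k * (p.choose k : K)
      = (1 + ∑ k ∈ Finset.Ico 1 p, η ^ k * (p.choose k : K)) + η ^ p := by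
    rw [Finset.sum_range_succ, Finset.range_eq_Ico, Finset.sum_eq_sum_Ico_succ_bot hp.pos]
    simp
  have hid : ξ ^ (N * p) - 1 - η ^ p = ∑ k ∈ Finset.Ico 1 p, η ^ k * (p.choose k : K) := by
    rw [h1, h2, h3]; ring
  rw [hid]
  have hηle : v η ≤ 1 := na_w_le_one v hna hξ N
  refine na_sum_le v hna (mul_nonneg (v.nonneg _) (v.nonneg _)) _ _ fun k hk => ?_
  rw [Finset.mem_Ico] at hk
  obtain ⟨t, ht⟩ := Nat.Prime.dvd_choose_self hp (by omega) hk.2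
  have hvc : v ((p.choose k : K)) ≤ v ((p : K)) := by
    rw [ht]; push_cast
    rw [v.map_mul]
    exact mul_le_of_le_one_right (v.nonneg _) (na_natCast_le_one v hna t)
  have hηk : v (η ^ k) ≤ v η := by
    rw [v.map_pow]
    exact pow_le_of_le_one (v.nonneg _) hηle (by omega)
  calc v (η ^ k * (p.choose k : K)) = v (η ^ k) * v ((p.choose k : K)) := v.map_mul _ _
    _ ≤ v η * v ((p : K)) :=
        mul_le_mul hηk hvc (v.nonneg _) (v.nonneg _)
    _ = v ((p : K)) * v η := mul_comm _ _

lemma na_step (hna : ∀ x y : K, v (x + y) ≤ max (v x) (v y))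
    {ξ : K} (hξ : v ξ ≤ 1) {p : ℕ} (hp : p.Prime) (N : ℕ) :
    v (ξ ^ (N * p) - 1) ≤ v (ξ ^ N - 1) * max (v ((p : K))) (v (ξ ^ N - 1)) := by
  set η := ξ ^ N - 1 with hη
  have hηle : v η ≤ 1 := na_w_le_one v hna hξ N
  have hdec : ξ ^ (N * p) - 1 = η ^ p + (ξ ^ (N * p) - 1 - η ^ p) := by ring
  have h1 : v (η ^ p) ≤ v η * max (v ((p : K))) (v η) := by
    rw [v.map_pow]
    calc v η ^ p ≤ v η ^ 2 := pow_le_pow_of_le_one (v.nonneg _) hηle hp.two_le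
      _ = v η * v η := sq (v η)
      _ ≤ v η * max (v ((p : K))) (v η) :=
        mul_le_mul_of_nonneg_left (le_max_right _ _) (v.nonneg _)
  have h2 : v (ξ ^ (N * p) - 1 - η ^ p) ≤ v η * max (v ((p : K))) (v η) := by
    refine (na_binom v hna hξ hp N).trans ?_
    rw [mul_comm]
    exact mul_le_mul_of_nonneg_left (le_max_left _ _) (v.nonneg _)
  calc v (ξ ^ (N * p) - 1) = v (η ^ p + (ξ ^ (N * p) - 1 - η ^ p)) := by rw [← hdec]
    _ ≤ max (v (η ^ p)) (v (ξ ^ (N * p) - 1 - η ^ p)) := hna _ _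
    _ ≤ v η * max (v ((p : K))) (v η) := max_le h1 h2

lemma na_res_one_char0 (hna : ∀ x y : K, v (x + y) ≤ max (v x) (v y))
    {p m : ℕ} (hp : p.Prime) (hvp : v ((p : K)) < 1)
    (hm : ¬ p ∣ m) : v ((m : K)) = 1 := by
  refine le_antisymm (na_natCast_le_one v hna m) ?_
  have hcop : Nat.Coprime m p := ((Nat.Prime.coprime_iff_not_dvd hp).mpr hm).symm
  have hbez := Nat.gcd_eq_gcd_ab m p
  rw [Nat.Coprime] at hcop
  rw [hcop] at hbez
  have hcast : (1 : K) = (m : K) * ((Nat.gcdA m p : ℤ) : K) + (p : K) * ((Nat.gcdB m p : ℤ) : K) := by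
    have := congrArg (fun z : ℤ => (z : K)) hbez
    push_cast at this ⊢
    linear_combination this
  have h1 : (1 : ℝ) = v ((m : K) * ((Nat.gcdA m p : ℤ) : K) + (p : K) * ((Nat.gcdB m p : ℤ) : K)) := by
    rw [← hcast, v.map_one]
  have h2 : v ((p : K) * ((Nat.gcdB m p : ℤ) : K)) < 1 := by
    rw [v.map_mul]
    calc v ((p : K)) * v (((Nat.gcdB m p : ℤ) : K))
        ≤ v ((p : K)) * 1 := mul_le_mul_of_nonneg_left (na_intCast_le_one v hna _) (v.nonneg _)
      _ = v ((p : K)) := mul_one _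
      _ < 1 := hvp
  have h3 : v ((m : K) * ((Nat.gcdA m p : ℤ) : K)) ≤ v ((m : K)) := by
    rw [v.map_mul]
    exact mul_le_of_le_one_right (v.nonneg _) (na_intCast_le_one v hna _)
  by_contra hlt
  push_neg at hlt
  have hv := (hna _ _).trans_lt (max_lt (h3.trans_lt hlt) h2)
  rw [← hcast, v.map_one] at hv
  exact lt_irrefl _ hv
  
lemma na_res_one_charp {p m : ℕ} (hp : p.Prime) [CharP K p] (hm : ¬ p ∣ m) :
    v ((m : K)) = 1 := by
  haveI : Fact p.Prime := ⟨hp⟩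
  have hz : ((m : ZMod p)) ≠ 0 := by
    rw [Ne, ZMod.natCast_eq_zero_iff]
    exact hm
  have hzp : ((m : ZMod p)) ^ (p - 1) = 1 := ZMod.pow_card_sub_one_eq_one hz
  have hK : ((m : K)) ^ (p - 1) = 1 := by
    have := congrArg (ZMod.castHom (dvd_refl p) K) hzp
    rw [map_pow, map_one, map_natCast] at this
    exact this
  have hv : v ((m : K)) ^ (p - 1) = 1 := by
    rw [← v.map_pow, hK, v.map_one]
  have hne : p - 1 ≠ 0 := by have := hp.two_le; omega
  rcases (pow_eq_one_iff_cases).mp hv with h | h | h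
  · exact absurd h hne
  · exact h
  · exfalso; nlinarith [v.nonneg ((m : K)), h.1]

end NonarchAux

/-- nonarchimedean absolute values of `ξⁿ − 1` in terms of gcd sequences. -/
theorem nonarchimedean_abs_of_pow_sub_one {K : Type*} [Field K]
    (v : AbsoluteValue K ℝ)
    (hna : ∀ x y : K, v (x + y) ≤ max (v x) (v y))
    (ξ : K) (hξ : ∀ m : ℕ, 1 ≤ m → ξ ^ m ≠ 1) :
    (1 < v ξ → ∀ n : ℕ, 1 ≤ n → v (ξ ^ n - 1) = (v ξ) ^ n) ∧
    (v ξ ≤ 1 → CharZero K → (∀ m : ℤ, m ≠ 0 → v ((m : K)) = 1) →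
      ∃ r : ℕ → ℝ, IsGcdSeq r ∧ (∀ n : ℕ, 1 ≤ n → 0 < r n) ∧
        ∀ n : ℕ, 1 ≤ n → v (ξ ^ n - 1) = r n) ∧
    (∀ p : ℕ, Nat.Prime p → v ξ ≤ 1 → CharZero K → v ((p : K)) < 1 →
      ∃ r s : ℕ → ℝ, IsGcdSeq r ∧ (∀ n : ℕ, 1 ≤ n → 0 < r n) ∧
        IsGcdSeqCoprime s p ∧ (∀ n : ℕ, 1 ≤ n → 0 ≤ s n) ∧
        ∀ n : ℕ, 1 ≤ n → v (ξ ^ n - 1) = r n * padicAbs p n ^ s n) ∧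
    (∀ p : ℕ, Nat.Prime p → v ξ ≤ 1 → CharP K p →
      ∃ t : ℕ → ℝ, IsGcdSeqCoprime t p ∧ (∀ n : ℕ, 1 ≤ n → 0 ≤ t n) ∧
        ∀ n : ℕ, 1 ≤ n → v (ξ ^ n - 1) = (p : ℝ) ^ (-(t n) * (padicAbs p n)⁻¹)) := by
  refine ⟨?_, ?_, ?_, ?_⟩
  · -- Part 1
    intro h1 n hn
    have hx : v ((-1 : K)) < v (ξ ^ n) := by
      rw [v.map_neg, v.map_one, v.map_pow]
      exact one_lt_pow₀ h1 (by omega)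
    have h2 := na_add_eq v hna hx
    rw [← sub_eq_add_neg, v.map_pow] at h2
    exact h2
  · -- Part 2
    intro hξ1 _inst hm1
    by_cases hex : ∃ k, 1 ≤ k ∧ v (ξ ^ k - 1) < 1
    · classical
      set d := Nat.find hex with hd_def
      have hdspec := Nat.find_spec hex
      have hd1 : 1 ≤ d := hdspec.1
      have hdlt : v (ξ ^ d - 1) < 1 := hdspec.2
      have hmin : ∀ k, 1 ≤ k → v (ξ ^ k - 1) < 1 → d ≤ k := fun k h1 h2 =>
        Nat.find_min' hex ⟨h1, h2⟩
      have hv1 : v ξ = 1 := by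
        rcases lt_or_eq_of_le hξ1 with h | h
        · exact absurd (na_w_eq_one_of_lt v hna h hd1) (ne_of_lt hdlt)
        · exact h
      refine ⟨fun n => v (ξ ^ Nat.gcd n d - 1), ⟨d, hd1, fun n hn => ?_⟩,
        fun n hn => ?_, fun n hn => ?_⟩
      · have hgg : Nat.gcd (Nat.gcd n d) d = Nat.gcd n d := by
          rw [Nat.gcd_assoc, Nat.gcd_self]
        dsimp only
        rw [hgg]
      · dsimp only
        have hg1 : 0 < Nat.gcd n d := Nat.gcd_pos_of_pos_right n (by omega)
        exact v.pos (sub_ne_zero.mpr (hξ _ hg1))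
      · dsimp only
        by_cases hdn : d ∣ n
        · have hg : Nat.gcd n d = d := Nat.gcd_eq_right hdn
          rw [hg]
          obtain ⟨m, rfl⟩ := hdn
          have hmpos : 1 ≤ m := by
            rcases Nat.eq_zero_or_pos m with h0 | h0
            · subst h0; simp at hn
            · exact h0
          have hvm : v ((m : K)) = 1 := by
            have h := hm1 (m : ℤ) (by exact_mod_cast (by omega : m ≠ 0))
            rwa [Int.cast_natCast] at h
          rw [na_lemA v hna hξ1 (by rw [hvm]; exact hdlt), hvm, mul_one]
        · have hgd : Nat.gcd n d ∣ d := Nat.gcd_dvd_right n d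
          have hglt : Nat.gcd n d < d := lt_of_le_of_ne (Nat.le_of_dvd (by omega) hgd)
            (fun he => hdn (he ▸ Nat.gcd_dvd_left n d))
          have hg1 : 1 ≤ Nat.gcd n d := Nat.gcd_pos_of_pos_right n (by omega)
          rw [na_not_dvd_eq_one v hna hv1 hd1 hdlt hmin hn hdn]
          refine (le_antisymm (na_w_le_one v hna hξ1 _) (not_lt.mp fun hlt => ?_)).symm
          exact absurd (hmin _ hg1 hlt) (not_le.mpr hglt)
    · push_neg at hex
      exact ⟨fun _ => 1, ⟨1, le_rfl, fun n hn => rfl⟩, fun n hn => one_pos,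
        fun n hn => le_antisymm (na_w_le_one v hna hξ1 n) (hex n hn)⟩
  · -- Part 3
    intro p hp hξ1 _inst hvp
    haveI : Fact p.Prime := ⟨hp⟩
    have hp1R : (1 : ℝ) < (p : ℝ) := by exact_mod_cast hp.one_lt
    by_cases hex : ∃ k, 1 ≤ k ∧ v (ξ ^ k - 1) < 1
    · classical
      obtain ⟨d, ⟨hd1, hdlt⟩, hmin⟩ :
          ∃ d, (1 ≤ d ∧ v (ξ ^ d - 1) < 1) ∧ ∀ k, 1 ≤ k → v (ξ ^ k - 1) < 1 → d ≤ k :=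
        ⟨Nat.find hex, Nat.find_spec hex, fun k h1 h2 => Nat.find_min' hex ⟨h1, h2⟩⟩
      have hv1 : v ξ = 1 := by
        rcases lt_or_eq_of_le hξ1 with h | h
        · exact absurd (na_w_eq_one_of_lt v hna h hd1) (ne_of_lt hdlt)
        · exact h
      have hvp0 : 0 < v ((p : K)) := v.pos (Nat.cast_ne_zero.mpr hp.pos.ne')
      have hpd : ¬ p ∣ d := by
        intro hdvd
        obtain ⟨d₀, rfl⟩ := hdvd
        have hd₀1 : 1 ≤ d₀ := by
          rcases Nat.eq_zero_or_pos d₀ with h0 | h0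
          · subst h0; simp at hd1
          · exact h0
        have hw : v (ξ ^ d₀ - 1) < 1 := by
          by_contra hge
          have heq : v (ξ ^ d₀ - 1) = 1 :=
            le_antisymm (na_w_le_one v hna hξ1 _) (not_lt.mp hge)
          have hb := na_binom v hna hξ1 hp d₀
          rw [heq, mul_one] at hb
          have hηp : v ((ξ ^ d₀ - 1) ^ p) = 1 := by rw [v.map_pow, heq, one_pow]
          have hdec : ξ ^ (d₀ * p) - 1
              = (ξ ^ d₀ - 1) ^ p + (ξ ^ (d₀ * p) - 1 - (ξ ^ d₀ - 1) ^ p) := by ring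
          have h2 : v (ξ ^ (d₀ * p) - 1) = 1 := by
            rw [hdec, na_add_eq v hna (by rw [hηp]; exact lt_of_le_of_lt hb hvp), hηp]
          rw [mul_comm d₀ p] at h2
          exact (ne_of_lt hdlt) h2
        have := hmin d₀ hd₀1 hw
        nlinarith [hp.two_le]
      have hcop : Nat.Coprime d p := ((Nat.Prime.coprime_iff_not_dvd hp).mpr hpd).symm
      set ε : ℕ → ℝ := fun j => v (ξ ^ (d * p ^ j) - 1) with hεdef
      have hεlt : ∀ j, ε j < 1 := fun j =>
        lt_of_le_of_lt (na_w_mul_le v hna hξ1 d (p ^ j)) hdlt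
      have hdpj1 : ∀ j, 1 ≤ d * p ^ j := fun j => Nat.mul_pos hd1 (pow_pos hp.pos j)
      have hεpos : ∀ j, 0 < ε j := fun j => v.pos (sub_ne_zero.mpr (hξ _ (hdpj1 j)))
      have hstep : ∀ j, ε (j + 1) ≤ ε j * max (v ((p : K))) (ε j) := by
        intro j
        have h := na_step v hna hξ1 hp (d * p ^ j)
        rwa [mul_assoc, ← pow_succ] at h
      obtain ⟨E, hE⟩ : ∃ E, ε E < v ((p : K)) := by
        obtain ⟨k, hk⟩ := exists_pow_lt_of_lt_one hvp0 (hεlt 0)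
        have hQ : ∀ j, ε j < v ((p : K)) ∨ ε j ≤ ε 0 ^ 2 ^ j := by
          intro j
          induction j with
          | zero => right; simp
          | succ i ih =>
            have hstepi := hstep i
            by_cases hc : ε i < v ((p : K))
            · left
              calc ε (i + 1) ≤ ε i * v ((p : K)) := by rwa [max_eq_left hc.le] at hstepi
                _ < 1 * v ((p : K)) := mul_lt_mul_of_pos_right (hεlt i) hvp0
                _ = v ((p : K)) := one_mul _
            · rcases ih with h | h
              · exact absurd h hc
              · right
                push_neg at hc
                calc ε (i + 1) ≤ ε i * ε i := by rwa [max_eq_right hc] at hstepi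
                  _ ≤ ε 0 ^ 2 ^ i * (ε 0 ^ 2 ^ i) :=
                      mul_le_mul h h (hεpos i).le (pow_nonneg (hεpos 0).le _)
                  _ = ε 0 ^ 2 ^ (i + 1) := by
                      rw [← pow_add]
                      congr 1
                      rw [pow_succ, mul_two]
        rcases hQ k with h | h
        · exact ⟨k, h⟩
        · refine ⟨k, lt_of_le_of_lt (h.trans ?_) hk⟩
          exact pow_le_pow_of_le_one (hεpos 0).le (hεlt 0).le (Nat.le_of_lt (Nat.lt_two_pow_self (n := k)))
      have hgeo : ∀ i, ε (E + i) = ε E * v ((p : K)) ^ i := by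
        intro i
        induction i with
        | zero => simp
        | succ i ih =>
          have hlt : ε (E + i) < v ((p : K)) := by
            rw [ih]
            calc ε E * v ((p : K)) ^ i ≤ ε E * 1 :=
                mul_le_mul_of_nonneg_left (pow_le_one₀ hvp0.le hvp.le) (hεpos E).le
              _ = ε E := mul_one _
              _ < v ((p : K)) := hE
          have h2 := na_lemA v hna hξ1 (n := d * p ^ (E + i)) (m := p) hlt
          rw [mul_assoc, ← pow_succ] at h2
          rw [show E + (i + 1) = (E + i) + 1 from by omega]
          show v (ξ ^ (d * p ^ (E + i + 1)) - 1) = ε E * v ((p : K)) ^ (i + 1)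
          rw [h2]
          show ε (E + i) * v ((p : K)) = ε E * v ((p : K)) ^ (i + 1)
          rw [ih]
          ring
      have hεformula : ∀ e : ℕ, ε e = ε (min e E) * v ((p : K)) ^ (e - min e E) := by
        intro e
        rcases le_or_gt e E with h | h
        · rw [min_eq_left h, Nat.sub_self, pow_zero, mul_one]
        · rw [min_eq_right h.le]
          have h2 := hgeo (e - E)
          rwa [Nat.add_sub_cancel' h.le] at h2
      set σ : ℝ := -Real.logb p (v ((p : K))) with hσdef
      have hσ : (p : ℝ) ^ (-σ) = v ((p : K)) := by
        rw [hσdef, neg_neg]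
        exact Real.rpow_logb (by positivity) (ne_of_gt hp1R) hvp0
      have hσpos : 0 < σ := by
        rw [hσdef]
        simpa using Real.logb_neg hp1R hvp0 hvp
      have hval : ∀ n : ℕ, 1 ≤ n →
          padicValNat p (Nat.gcd n (d * p ^ E)) = min (padicValNat p n) E := by
        intro n hn
        have hD : d * p ^ E ≠ 0 := Nat.mul_ne_zero (by omega) (pow_ne_zero E hp.pos.ne')
        have hfac := Nat.factorization_gcd (by omega : n ≠ 0) hD
        have h1 : (Nat.gcd n (d * p ^ E)).factorization p
            = min (n.factorization p) ((d * p ^ E).factorization p) := by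
          rw [hfac, Finsupp.inf_apply]
        have h2 : (d * p ^ E).factorization p = E := by
          rw [Nat.factorization_mul (by omega : d ≠ 0) (pow_ne_zero E hp.pos.ne'),
            Finsupp.add_apply, Nat.Prime.factorization_pow hp, Finsupp.single_eq_same,
            Nat.factorization_def d hp, padicValNat.eq_zero_of_not_dvd hpd, zero_add]
        rw [← Nat.factorization_def _ hp, h1, h2, Nat.factorization_def n hp]
      have hgcddvd : ∀ n : ℕ, d ∣ Nat.gcd n (d * p ^ E) ↔ d ∣ n := fun n =>
        ⟨fun h => h.trans (Nat.gcd_dvd_left _ _), fun h => Nat.dvd_gcd h (dvd_mul_right d _)⟩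
      refine ⟨fun n => if d ∣ n then
          ε (min (padicValNat p n) E) / v ((p : K)) ^ (min (padicValNat p n) E) else 1,
        fun n => if d ∣ n then σ else 0,
        ⟨d * p ^ E, hdpj1 E, fun n hn => ?_⟩, fun n hn => ?_,
        ⟨d, hd1, hcop, fun n hn => ?_⟩, fun n hn => ?_, fun n hn => ?_⟩
      · dsimp only
        by_cases hdn : d ∣ n
        · rw [if_pos hdn, if_pos ((hgcddvd n).mpr hdn), hval n hn,
            show min (min (padicValNat p n) E) E = min (padicValNat p n) E from by omega]
        · rw [if_neg hdn, if_neg (fun h => hdn ((hgcddvd n).mp h))]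
      · dsimp only
        split
        · exact div_pos (hεpos _) (pow_pos hvp0 _)
        · exact one_pos
      · dsimp only
        have hiff : d ∣ Nat.gcd n d ↔ d ∣ n :=
          ⟨fun h => h.trans (Nat.gcd_dvd_left n d), fun h => Nat.dvd_gcd h dvd_rfl⟩
        by_cases hdn : d ∣ n <;> simp [hdn, hiff]
      · dsimp only
        split
        · exact hσpos.le
        · exact le_rfl
      · dsimp only
        set e := padicValNat p n with he
        have hne : n ≠ 0 := by omega
        by_cases hdn : d ∣ n
        · have hdvd : p ^ e ∣ n := pow_padicValNat_dvd
          have hdpE : d * p ^ e ∣ n :=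
            Nat.Coprime.mul_dvd_of_dvd_of_dvd (hcop.pow_right e) hdn hdvd
          obtain ⟨m, hm⟩ := hdpE
          have hmpos : 1 ≤ m := by
            rcases Nat.eq_zero_or_pos m with h0 | h0
            · rw [h0, mul_zero] at hm; omega
            · exact h0
          have hpm : ¬ p ∣ m := by
            intro hq
            obtain ⟨m', rfl⟩ := hq
            have hq2 : p ^ (e + 1) ∣ n := ⟨d * m', by rw [hm]; ring⟩
            exact pow_succ_padicValNat_not_dvd hne hq2
          have hvm : v ((m : K)) = 1 := na_res_one_char0 v hna hp hvp hpm
          have hwn : v (ξ ^ n - 1) = ε e := by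
            rw [hm, na_lemA v hna hξ1 (by rw [hvm]; exact hεlt e), hvm, mul_one]
          have hpadic : padicAbs p n ^ σ = v ((p : K)) ^ e := by
            have h0 : padicAbs p n = (p : ℝ) ^ (-(e : ℝ)) := by
              show ((p : ℝ) ^ padicValNat p n)⁻¹ = _
              rw [← he, ← Real.rpow_natCast (p : ℝ) e,
                ← Real.rpow_neg (by positivity : (0 : ℝ) ≤ (p : ℝ))]
            rw [h0, ← Real.rpow_mul (by positivity : (0 : ℝ) ≤ (p : ℝ)),
              show -(e : ℝ) * σ = -σ * (e : ℝ) from by ring,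
              Real.rpow_mul (by positivity : (0 : ℝ) ≤ (p : ℝ)), hσ, Real.rpow_natCast]
          rw [if_pos hdn, if_pos hdn, hwn, hpadic, hεformula e, div_mul_eq_mul_div,
            eq_div_iff (by positivity), mul_assoc, ← pow_add,
            show e - min e E + min e E = e from by omega]
        · rw [if_neg hdn, if_neg hdn,
            na_not_dvd_eq_one v hna hv1 hd1 hdlt hmin hn hdn, Real.rpow_zero, mul_one]
    · push_neg at hex
      refine ⟨fun _ => 1, fun _ => 0, ⟨1, le_rfl, fun n hn => rfl⟩, fun n hn => one_pos,
        ⟨1, le_rfl, Nat.coprime_one_left p, fun n hn => rfl⟩, fun n hn => le_rfl,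
        fun n hn => ?_⟩
      rw [le_antisymm (na_w_le_one v hna hξ1 n) (hex n hn), Real.rpow_zero, mul_one]
  · -- Part 4
    intro p hp hξ1 hcp
    haveI := hcp
    haveI : Fact p.Prime := ⟨hp⟩
    have hp1R : (1 : ℝ) < (p : ℝ) := by exact_mod_cast hp.one_lt
    by_cases hex : ∃ k, 1 ≤ k ∧ v (ξ ^ k - 1) < 1
    · classical
      obtain ⟨d, ⟨hd1, hdlt⟩, hmin⟩ :
          ∃ d, (1 ≤ d ∧ v (ξ ^ d - 1) < 1) ∧ ∀ k, 1 ≤ k → v (ξ ^ k - 1) < 1 → d ≤ k :=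
        ⟨Nat.find hex, Nat.find_spec hex, fun k h1 h2 => Nat.find_min' hex ⟨h1, h2⟩⟩
      have hv1 : v ξ = 1 := by
        rcases lt_or_eq_of_le hξ1 with h | h
        · exact absurd (na_w_eq_one_of_lt v hna h hd1) (ne_of_lt hdlt)
        · exact h
      have hfrob1 : ∀ N : ℕ, v (ξ ^ (p * N) - 1) = v (ξ ^ N - 1) ^ p := by
        intro N
        have hh : ξ ^ (p * N) - 1 = (ξ ^ N - 1) ^ p := by
          rw [sub_pow_char, one_pow, ← pow_mul, mul_comm N p]
        rw [hh, v.map_pow]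
      have hpd : ¬ p ∣ d := by
        intro hdvd
        obtain ⟨d₀, rfl⟩ := hdvd
        have hd₀1 : 1 ≤ d₀ := by
          rcases Nat.eq_zero_or_pos d₀ with h0 | h0
          · subst h0; simp at hd1
          · exact h0
        have hw : v (ξ ^ d₀ - 1) < 1 := by
          by_contra hge
          have heq : v (ξ ^ d₀ - 1) = 1 :=
            le_antisymm (na_w_le_one v hna hξ1 _) (not_lt.mp hge)
          have h2 := hfrob1 d₀
          rw [heq, one_pow] at h2
          exact (ne_of_lt hdlt) h2
        have := hmin d₀ hd₀1 hw
        nlinarith [hp.two_le]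
      have hcop : Nat.Coprime d p := ((Nat.Prime.coprime_iff_not_dvd hp).mpr hpd).symm
      have hwdpos : 0 < v (ξ ^ d - 1) := v.pos (sub_ne_zero.mpr (hξ d hd1))
      set τ : ℝ := -Real.logb p (v (ξ ^ d - 1)) with hτdef
      have hτ : (p : ℝ) ^ (-τ) = v (ξ ^ d - 1) := by
        rw [hτdef, neg_neg]
        exact Real.rpow_logb (by positivity) (ne_of_gt hp1R) hwdpos
      have hτpos : 0 < τ := by
        rw [hτdef]
        simpa using Real.logb_neg hp1R hwdpos hdlt
      refine ⟨fun n => if d ∣ n then τ else 0, ⟨d, hd1, hcop, fun n hn => ?_⟩,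
        fun n hn => ?_, fun n hn => ?_⟩
      · dsimp only
        have hiff : d ∣ Nat.gcd n d ↔ d ∣ n :=
          ⟨fun h => h.trans (Nat.gcd_dvd_left n d), fun h => Nat.dvd_gcd h dvd_rfl⟩
        by_cases hdn : d ∣ n <;> simp [hdn, hiff]
      · dsimp only
        split
        · exact hτpos.le
        · exact le_rfl
      · dsimp only
        set e := padicValNat p n with he
        have hne : n ≠ 0 := by omega
        have hdvd : p ^ e ∣ n := pow_padicValNat_dvd
        set n' := n / p ^ e with hn'def
        have hmn : p ^ e * n' = n := Nat.mul_div_cancel' hdvd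
        have hn'pos : 1 ≤ n' := by
          rcases Nat.eq_zero_or_pos n' with h0 | h0
          · rw [h0, mul_zero] at hmn; omega
          · exact h0
        have hpn' : ¬ p ∣ n' := by
          intro hdvd'
          have h2 : p ^ (e + 1) ∣ n := by
            rw [← hmn, pow_succ]
            exact mul_dvd_mul_left (p ^ e) hdvd'
          exact pow_succ_padicValNat_not_dvd hne h2
        have hfrob : v (ξ ^ n - 1) = v (ξ ^ n' - 1) ^ p ^ e := by
          have hxn : ξ ^ n = (ξ ^ n') ^ p ^ e := by rw [← pow_mul, mul_comm, hmn]
          have hsub : (ξ ^ n') ^ p ^ e - 1 = (ξ ^ n' - 1) ^ p ^ e := by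
            rw [sub_pow_char_pow, one_pow]
          rw [hxn, hsub, v.map_pow]
        have hpadic : (padicAbs p n)⁻¹ = ((p ^ e : ℕ) : ℝ) := by
          show (((p : ℝ) ^ padicValNat p n)⁻¹)⁻¹ = ((p ^ e : ℕ) : ℝ)
          rw [inv_inv, ← he]
          push_cast
          ring
        by_cases hdn : d ∣ n
        · have hdn'' : d ∣ n' * p ^ e := by rw [mul_comm, hmn]; exact hdn
          have hdn' : d ∣ n' := Nat.Coprime.dvd_of_dvd_mul_right (hcop.pow_right e) hdn''
          obtain ⟨m, hm⟩ := hdn'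
          have hmpos : 1 ≤ m := by
            rcases Nat.eq_zero_or_pos m with h0 | h0
            · rw [h0, mul_zero] at hm; omega
            · exact h0
          have hpm : ¬ p ∣ m := fun h => hpn' (hm ▸ Dvd.dvd.mul_left h d)
          have hvm : v ((m : K)) = 1 := na_res_one_charp v hp hpm
          have hwn' : v (ξ ^ n' - 1) = v (ξ ^ d - 1) := by
            rw [hm, na_lemA v hna hξ1 (by rw [hvm]; exact hdlt), hvm, mul_one]
          rw [if_pos hdn, hfrob, hwn', ← hτ, hpadic,
            ← Real.rpow_natCast ((p : ℝ) ^ (-τ)) (p ^ e),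
            ← Real.rpow_mul (by positivity : (0 : ℝ) ≤ (p : ℝ))]
        · have hdn' : ¬ d ∣ n' := fun h => hdn (h.trans ⟨p ^ e, by rw [← hmn]; ring⟩)
          have hwn' : v (ξ ^ n' - 1) = 1 :=
            na_not_dvd_eq_one v hna hv1 hd1 hdlt hmin hn'pos hdn'
          rw [if_neg hdn, hfrob, hwn', one_pow, neg_zero, zero_mul, Real.rpow_zero]
    · push_neg at hex
      refine ⟨fun _ => 0, ⟨1, le_rfl, Nat.coprime_one_left p, fun n hn => rfl⟩,
        fun n hn => le_rfl, fun n hn => ?_⟩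
      rw [le_antisymm (na_w_le_one v hna hξ1 n) (hex n hn), neg_zero, zero_mul,
        Real.rpow_zero]
end
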